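/- arXiv:0710.2319 — 2 statements merged into one kernel-verified Lean document; each statement's English description precedes it below -/
import Mathlib

section
/- Let h : ℝ → ℂ be a Schwartz function. Then for every N ∈ ℕ there exists C_N > 0 such that for all t ∈ ℝ with |t| ≥ 1, | ∫_ℝ h(t − r) · r·tanh(πr) dr − ( |t| ∫_ℝ h(r) dr − sign(t) ∫_ℝ h(r)·r dr ) | ≤ C_N (1 + |t|)^{−N}. -/
open Real MeasureTheory

private lemma one_add_mul_exp_le {c u : ℝ} (hc : 0 < c) (hu : 0 ≤ u) :
    (1 + u) * Real.exp (-(c * u)) ≤ 1 + 1 / c := by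
  have hE : 0 < Real.exp (c * u) := Real.exp_pos _
  have h1 : c * u + 1 ≤ Real.exp (c * u) := Real.add_one_le_exp _
  rw [Real.exp_neg, mul_inv_le_iff₀ hE]
  have h2 : (1 + 1 / c) * (c * u + 1) = c * u + 1 + u + 1 / c := by field_simp; ring
  have h3 : 1 + u ≤ (1 + 1 / c) * (c * u + 1) := by
    rw [h2]; have : 0 ≤ c * u := by positivity
    have : 0 ≤ 1 / c := by positivity
    linarith
  exact h3.trans (by nlinarith [one_div_pos.mpr hc])

private lemma pow_mul_exp_le (M : ℕ) {u : ℝ} (hu : 0 ≤ u) :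
    (1 + u) ^ M * Real.exp (-(2 * π * u)) ≤ (1 + M) ^ M := by
  rcases Nat.eq_zero_or_pos M with rfl | hM
  · simpa using Real.exp_le_one_iff.mpr (by nlinarith [Real.pi_pos] : -(2 * π * u) ≤ 0)
  · have hMR : (0:ℝ) < M := by exact_mod_cast hM
    have hc : (0:ℝ) < 2 * π / M := by positivity
    have key : (1 + u) * Real.exp (-(2 * π / M * u)) ≤ 1 + M := by
      refine (one_add_mul_exp_le hc hu).trans ?_
      have : 1 / (2 * π / (M:ℝ)) = M / (2 * π) := by field_simp
      rw [this]
      have hπ : (1:ℝ) ≤ 2 * π := by nlinarith [Real.pi_gt_three]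
      have := div_le_self hMR.le hπ
      linarith
    calc (1 + u) ^ M * Real.exp (-(2 * π * u))
        = ((1 + u) * Real.exp (-(2 * π / M * u))) ^ M := by
          rw [mul_pow, ← Real.exp_nat_mul]
          congr 2
          field_simp
      _ ≤ (1 + M) ^ M := by
          apply pow_le_pow_left₀ (by positivity) key

private lemma one_sub_tanh_nonneg (x : ℝ) : Real.tanh x ≤ 1 := by
  rw [Real.tanh_eq_sinh_div_cosh, div_le_one (Real.cosh_pos x)]
  nlinarith [Real.cosh_eq x, Real.sinh_eq x, Real.exp_pos (-x), Real.exp_pos x]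

private lemma abs_tanh_le_one (x : ℝ) : |Real.tanh x| ≤ 1 := by
  rw [abs_le]
  constructor
  · have := one_sub_tanh_nonneg (-x)
    rw [Real.tanh_neg] at this; linarith
  · exact one_sub_tanh_nonneg x

private lemma tanh_sub_one_bound {x : ℝ} (_hx : 0 ≤ x) :
    |Real.tanh x - 1| ≤ 2 * Real.exp (-(2 * x)) := by
  have hc := Real.cosh_pos x
  have h1 : 1 - Real.tanh x = Real.exp (-x) / Real.cosh x := by
    rw [Real.tanh_eq_sinh_div_cosh]
    field_simp
    rw [Real.cosh_eq, Real.sinh_eq]; ring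
  rw [abs_sub_comm, abs_of_nonneg (by linarith [one_sub_tanh_nonneg x]), h1]
  have h2 : Real.exp x / 2 ≤ Real.cosh x := by
    nlinarith [Real.cosh_eq x, Real.exp_pos (-x)]
  calc Real.exp (-x) / Real.cosh x ≤ Real.exp (-x) / (Real.exp x / 2) := by
        apply div_le_div_of_nonneg_left (Real.exp_pos _).le (by positivity) h2
      _ = 2 * Real.exp (-(2 * x)) := by
        rw [Real.exp_neg, Real.exp_neg, show (2:ℝ) * x = x + x by ring, Real.exp_add]
        have := Real.exp_pos x
        field_simp

private lemma peetre_ineq (t r : ℝ) : 1 + |t| ≤ (1 + |r|) * (1 + |t - r|) := by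
  have h1 : |t| ≤ |r| + |t - r| := by
    calc |t| = |r + (t - r)| := by ring_nf
      _ ≤ |r| + |t - r| := abs_add_le _ _
  nlinarith [abs_nonneg r, abs_nonneg (t - r)]

private lemma schwartz_decay_bound (h : SchwartzMap ℝ ℂ) (M : ℕ) :
    ∃ D : ℝ, 0 < D ∧ ∀ x : ℝ, (1 + |x|) ^ M * ‖h x‖ ≤ D := by
  refine ⟨max 1 (2 ^ M * (Finset.Iic (M, 0)).sup
      (fun m => SchwartzMap.seminorm ℝ m.1 m.2) h), lt_of_lt_of_le one_pos (le_max_left _ _), ?_⟩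
  intro x
  refine le_trans ?_ (le_max_right _ _)
  have := SchwartzMap.one_add_le_sup_seminorm_apply (𝕜 := ℝ) (m := (M, 0))
    le_rfl le_rfl h x
  simpa [Real.norm_eq_abs, norm_iteratedFDeriv_zero] using this

private lemma div_trick {L A B c : ℝ} (hA : 0 < A) (hB : 0 < B)
    (hmain : L * (A * B) ≤ c) : L ≤ c * A⁻¹ * B⁻¹ := by
  have h1 : L ≤ c / (A * B) := (le_div_iff₀ (by positivity)).mpr hmain
  rw [div_eq_mul_inv, mul_inv, ← mul_assoc] at h1
  exact h1

set_option maxHeartbeats 1000000 in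
private lemma key_bound (h : SchwartzMap ℝ ℂ) (N : ℕ) :
    ∃ D : ℝ, 0 < D ∧ ∀ t r : ℝ, 1 ≤ |t| →
      ‖h r‖ * |(t - r) * Real.tanh (π * (t - r)) - Real.sign t * (t - r)| ≤
        D * ((1 + |t|) ^ N)⁻¹ * ((1 + (t - r) ^ 2)⁻¹ + (1 + r ^ 2)⁻¹) := by
  obtain ⟨D₁, hD₁pos, hD₁⟩ := schwartz_decay_bound h (N + 3)
  set K : ℝ := 2 * (1 + (N + 3 : ℕ)) ^ (N + 3) with hK
  have hKpos : 0 < K := by positivity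
  set D : ℝ := D₁ * K + 4 * D₁ with hD
  have hDpos : 0 < D := by positivity
  refine ⟨D, hDpos, ?_⟩
  intro t r ht
  have ht0 : t ≠ 0 := by intro h0; rw [h0] at ht; simp at ht; linarith
  have hA : (0:ℝ) < (1 + |t|) ^ N := by positivity
  have hB : (0:ℝ) < 1 + (t - r) ^ 2 := by positivity
  have hB' : (0:ℝ) < 1 + r ^ 2 := by positivity
  have habs : |(t - r) * Real.tanh (π * (t - r)) - Real.sign t * (t - r)|
      = |t - r| * |Real.tanh (π * (t - r)) - Real.sign t| := by
    rw [← abs_mul]; congr 1; ring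
  rw [habs]
  set u := |t - r| with hu
  have hu0 : 0 ≤ u := abs_nonneg _
  have hL0 : 0 ≤ ‖h r‖ * (u * |Real.tanh (π * (t - r)) - Real.sign t|) := by positivity
  have hsign : Real.sign t = 1 ∨ Real.sign t = -1 := by
    rcases lt_or_gt_of_ne ht0 with h0 | h0
    · right; exact Real.sign_of_neg h0
    · left; exact Real.sign_of_pos h0
  have honer : (1:ℝ) ≤ 1 + |r| := by linarith [abs_nonneg r]
  have hDK : D₁ * K ≤ D := by rw [hD]; nlinarith
  have h4D : 4 * D₁ ≤ D := by rw [hD]; nlinarith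
  by_cases hcase : 0 ≤ Real.sign t * (t - r)
  · -- same-sign case
    have htanh : |Real.tanh (π * (t - r)) - Real.sign t| ≤ 2 * Real.exp (-(2 * π * u)) := by
      rcases hsign with hs | hs
      · have hpos : 0 < t := by
          rcases lt_trichotomy t 0 with h0 | h0 | h0
          · rw [Real.sign_of_neg h0] at hs; norm_num at hs
          · exact absurd h0 ht0
          · exact h0
        have htr : 0 ≤ t - r := by rw [hs, one_mul] at hcase; exact hcase
        have huu : u = t - r := abs_of_nonneg htr
        rw [hs, huu]
        calc |Real.tanh (π * (t - r)) - 1|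
            ≤ 2 * Real.exp (-(2 * (π * (t - r)))) := tanh_sub_one_bound (by positivity)
          _ = 2 * Real.exp (-(2 * π * (t - r))) := by ring_nf
      · have hneg : t < 0 := by
          rcases lt_trichotomy t 0 with h0 | h0 | h0
          · exact h0
          · exact absurd h0 ht0
          · rw [Real.sign_of_pos h0] at hs; norm_num at hs
        have htr : t - r ≤ 0 := by
          rw [hs] at hcase; linarith
        have huu : u = -(t - r) := abs_of_nonpos htr
        rw [hs]
        have hx : 0 ≤ π * (r - t) := by
          have : 0 ≤ r - t := by linarith
          positivity
        have hT : Real.tanh (π * (t - r)) = -Real.tanh (π * (r - t)) := by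
          rw [show π * (t - r) = -(π * (r - t)) by ring, Real.tanh_neg]
        rw [hT]
        calc |-Real.tanh (π * (r - t)) - -1| = |Real.tanh (π * (r - t)) - 1| := by
              rw [← abs_neg]; congr 1; ring
          _ ≤ 2 * Real.exp (-(2 * (π * (r - t)))) := tanh_sub_one_bound hx
          _ = 2 * Real.exp (-(2 * π * u)) := by rw [huu]; ring_nf
    have main : ‖h r‖ * (u * |Real.tanh (π * (t - r)) - Real.sign t|)
        * ((1 + |t|) ^ N * (1 + (t - r) ^ 2)) ≤ D₁ * K := by
      have step1 : (1 + |t|) ^ N ≤ (1 + |r|) ^ N * (1 + u) ^ N := by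
        rw [← mul_pow]
        exact pow_le_pow_left₀ (by positivity) (peetre_ineq t r) N
      have step2 : 1 + (t - r) ^ 2 ≤ (1 + u) ^ 2 := by
        have h2 : (t - r) ^ 2 = u ^ 2 := (sq_abs _).symm
        nlinarith
      have step3 : ‖h r‖ * (1 + |r|) ^ N ≤ D₁ := by
        calc ‖h r‖ * (1 + |r|) ^ N ≤ ‖h r‖ * (1 + |r|) ^ (N + 3) := by
              apply mul_le_mul_of_nonneg_left _ (norm_nonneg _)
              exact pow_le_pow_right₀ honer (by omega)
          _ = (1 + |r|) ^ (N + 3) * ‖h r‖ := mul_comm _ _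
          _ ≤ D₁ := hD₁ r
      have step4 : u * (2 * Real.exp (-(2 * π * u))) * (1 + u) ^ (N + 2) ≤ K := by
        have e1 : u * (1 + u) ^ (N + 2) ≤ (1 + u) ^ (N + 3) := by
          rw [pow_succ ((1:ℝ) + u) (N + 2)]
          have e0 : (0:ℝ) ≤ (1 + u) ^ (N + 2) := by positivity
          nlinarith
        have e2 := pow_mul_exp_le (N + 3) hu0
        have e3 : 0 < Real.exp (-(2 * π * u)) := Real.exp_pos _
        rw [hK]
        nlinarith
      calc ‖h r‖ * (u * |Real.tanh (π * (t - r)) - Real.sign t|)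
            * ((1 + |t|) ^ N * (1 + (t - r) ^ 2))
          ≤ ‖h r‖ * (u * (2 * Real.exp (-(2 * π * u))))
            * ((1 + |r|) ^ N * (1 + u) ^ N * (1 + u) ^ 2) := by
            apply mul_le_mul
            · exact mul_le_mul_of_nonneg_left
                (mul_le_mul_of_nonneg_left htanh hu0) (norm_nonneg _)
            · calc (1 + |t|) ^ N * (1 + (t - r) ^ 2)
                  ≤ ((1 + |r|) ^ N * (1 + u) ^ N) * (1 + u) ^ 2 :=
                    mul_le_mul step1 step2 hB.le (by positivity)
                _ = (1 + |r|) ^ N * (1 + u) ^ N * (1 + u) ^ 2 := by ring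
            · positivity
            · positivity
        _ = (‖h r‖ * (1 + |r|) ^ N)
            * (u * (2 * Real.exp (-(2 * π * u))) * (1 + u) ^ (N + 2)) := by
            rw [pow_add ((1:ℝ) + u) N 2]; ring
        _ ≤ D₁ * K := mul_le_mul step3 step4 (by positivity) hD₁pos.le
    have final := div_trick hA hB (main.trans hDK)
    have expand : D * ((1 + |t|) ^ N)⁻¹ * ((1 + (t - r) ^ 2)⁻¹ + (1 + r ^ 2)⁻¹)
        = D * ((1 + |t|) ^ N)⁻¹ * (1 + (t - r) ^ 2)⁻¹
          + D * ((1 + |t|) ^ N)⁻¹ * (1 + r ^ 2)⁻¹ := by ring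
    have hpos2 : 0 ≤ D * ((1 + |t|) ^ N)⁻¹ * (1 + r ^ 2)⁻¹ := by positivity
    rw [expand]; linarith
  · -- opposite-sign case
    push_neg at hcase
    have hrt : |t| ≤ |r| := by
      rcases hsign with hs | hs
      · have hpos : 0 < t := by
          rcases lt_trichotomy t 0 with h0 | h0 | h0
          · rw [Real.sign_of_neg h0] at hs; norm_num at hs
          · exact absurd h0 ht0
          · exact h0
        have : t - r < 0 := by rw [hs, one_mul] at hcase; exact hcase
        rw [abs_of_pos hpos]
        calc t ≤ r := by linarith
          _ ≤ |r| := le_abs_self r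
      · have hneg : t < 0 := by
          rcases lt_trichotomy t 0 with h0 | h0 | h0
          · exact h0
          · exact absurd h0 ht0
          · rw [Real.sign_of_pos h0] at hs; norm_num at hs
        have : 0 < t - r := by rw [hs] at hcase; linarith
        rw [abs_of_neg hneg]
        calc -t ≤ -r := by linarith
          _ ≤ |r| := neg_le_abs r
    have htanh : |Real.tanh (π * (t - r)) - Real.sign t| ≤ 2 := by
      have h1 := abs_tanh_le_one (π * (t - r))
      have h2 : |Real.sign t| = 1 := by rcases hsign with hs | hs <;> rw [hs] <;> norm_num
      calc |Real.tanh (π * (t - r)) - Real.sign t|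
          ≤ |Real.tanh (π * (t - r))| + |Real.sign t| := abs_sub _ _
        _ ≤ 2 := by rw [h2]; linarith
    have hu2 : u ≤ 2 * (1 + |r|) := by
      calc u ≤ |t| + |r| := abs_sub t r
        _ ≤ 2 * (1 + |r|) := by linarith
    have main : ‖h r‖ * (u * |Real.tanh (π * (t - r)) - Real.sign t|)
        * ((1 + |t|) ^ N * (1 + r ^ 2)) ≤ 4 * D₁ := by
      have step1 : (1 + |t|) ^ N ≤ (1 + |r|) ^ N :=
        pow_le_pow_left₀ (by linarith [abs_nonneg t]) (by linarith) N
      have step2 : 1 + r ^ 2 ≤ (1 + |r|) ^ 2 := by nlinarith [sq_abs r, abs_nonneg r]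
      have step3 := hD₁ r
      have e1 : u * |Real.tanh (π * (t - r)) - Real.sign t| ≤ 2 * (1 + |r|) * 2 := by
        apply mul_le_mul hu2 htanh (abs_nonneg _) (by positivity)
      calc ‖h r‖ * (u * |Real.tanh (π * (t - r)) - Real.sign t|)
            * ((1 + |t|) ^ N * (1 + r ^ 2))
          ≤ ‖h r‖ * (2 * (1 + |r|) * 2) * ((1 + |r|) ^ N * (1 + |r|) ^ 2) := by
            apply mul_le_mul
            · exact mul_le_mul_of_nonneg_left e1 (norm_nonneg _)
            · exact mul_le_mul step1 step2 hB'.le (by positivity)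
            · positivity
            · positivity
        _ = 4 * ((1 + |r|) ^ (N + 3) * ‖h r‖) := by
            rw [pow_add ((1:ℝ) + |r|) N 3]; ring
        _ ≤ 4 * D₁ := by linarith
    have final := div_trick hA hB' (main.trans h4D)
    have expand : D * ((1 + |t|) ^ N)⁻¹ * ((1 + (t - r) ^ 2)⁻¹ + (1 + r ^ 2)⁻¹)
        = D * ((1 + |t|) ^ N)⁻¹ * (1 + (t - r) ^ 2)⁻¹
          + D * ((1 + |t|) ^ N)⁻¹ * (1 + r ^ 2)⁻¹ := by ring
    have hpos2 : 0 ≤ D * ((1 + |t|) ^ N)⁻¹ * (1 + (t - r) ^ 2)⁻¹ := by positivity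
    rw [expand]; linarith

set_option maxHeartbeats 1000000 in
/-- Asymptotic expansion, with rapidly decreasing error, of the convolution of
a Schwartz function with the Plancherel density `r tanh(π r)`. -/
theorem plancherel_convolution_expansion (h : SchwartzMap ℝ ℂ) :
    ∀ N : ℕ, ∃ C : ℝ, 0 < C ∧ ∀ t : ℝ, 1 ≤ |t| →
      ‖(∫ s : ℝ, h (t - s) * ((s * Real.tanh (π * s) : ℝ) : ℂ))
        - (((|t| : ℝ) : ℂ) * (∫ s : ℝ, h s)
            - ((Real.sign t : ℝ) : ℂ) * ∫ s : ℝ, h s * (s : ℂ))‖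
        ≤ C * (1 + |t|) ^ (-(N : ℤ)) := by
  intro N
  obtain ⟨D, hDpos, hbound⟩ := key_bound h N
  refine ⟨2 * π * D, by positivity, ?_⟩
  intro t ht
  have ht0 : t ≠ 0 := by intro h0; rw [h0] at ht; simp at ht; linarith
  have hσt : Real.sign t * t = |t| := by
    rcases lt_or_gt_of_ne ht0 with h0 | h0
    · rw [Real.sign_of_neg h0, abs_of_neg h0]; ring
    · rw [Real.sign_of_pos h0, abs_of_pos h0]; ring
  have habs_sign : |Real.sign t| ≤ 1 := by
    rcases lt_or_gt_of_ne ht0 with h0 | h0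
    · rw [Real.sign_of_neg h0]; norm_num
    · rw [Real.sign_of_pos h0]; norm_num
  -- integrability
  have hInt1 : Integrable (fun s : ℝ => ‖s‖ * ‖h s‖) := by
    simpa using h.integrable_pow_mul volume 1
  have hG : Integrable (fun s : ℝ => |t| * ‖h s‖ + ‖s‖ * ‖h s‖) :=
    (h.integrable.norm.const_mul |t|).add hInt1
  have hint3 : Integrable (fun s : ℝ => h s * (s : ℂ)) := by
    apply hInt1.mono' ((h.continuous.mul Complex.continuous_ofReal).aestronglyMeasurable)
    filter_upwards with s
    exact le_of_eq (by rw [Pi.mul_apply, norm_mul, Complex.norm_real, mul_comm])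
  have hint1 : Integrable
      (fun s : ℝ => h s * (((t - s) * Real.tanh (π * (t - s)) : ℝ) : ℂ)) := by
    apply hG.mono'
    · apply Continuous.aestronglyMeasurable
      apply h.continuous.mul
      apply Complex.continuous_ofReal.comp
      have htanh_cont : Continuous Real.tanh := by
        have e : Real.tanh = fun x => Real.sinh x / Real.cosh x :=
          funext fun x => Real.tanh_eq_sinh_div_cosh x
        rw [e]
        exact Real.continuous_sinh.div Real.continuous_cosh fun x => (Real.cosh_pos x).ne'
      exact (continuous_const.sub continuous_id).mul
        (htanh_cont.comp (continuous_const.mul (continuous_const.sub continuous_id)))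
    · filter_upwards with s
      rw [norm_mul, Complex.norm_real, Real.norm_eq_abs]
      have h1 : |(t - s) * Real.tanh (π * (t - s))| ≤ |t| + |s| := by
        rw [abs_mul]
        calc |t - s| * |Real.tanh (π * (t - s))| ≤ |t - s| * 1 :=
              mul_le_mul_of_nonneg_left (abs_tanh_le_one _) (abs_nonneg _)
          _ = |t - s| := mul_one _
          _ ≤ |t| + |s| := abs_sub t s
      have := norm_nonneg (h s)
      rw [Real.norm_eq_abs]
      nlinarith
  have hint2 : Integrable
      (fun s : ℝ => h s * ((Real.sign t * (t - s) : ℝ) : ℂ)) := by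
    apply hG.mono'
    · apply Continuous.aestronglyMeasurable
      apply h.continuous.mul
      apply Complex.continuous_ofReal.comp
      exact continuous_const.mul (continuous_const.sub continuous_id)
    · filter_upwards with s
      rw [norm_mul, Complex.norm_real, Real.norm_eq_abs]
      have h1 : |Real.sign t * (t - s)| ≤ |t| + |s| := by
        rw [abs_mul]
        calc |Real.sign t| * |t - s| ≤ 1 * |t - s| :=
              mul_le_mul_of_nonneg_right habs_sign (abs_nonneg _)
          _ = |t - s| := one_mul _
          _ ≤ |t| + |s| := abs_sub t s
      have := norm_nonneg (h s)
      rw [Real.norm_eq_abs]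
      nlinarith
  -- step 1 : change of variables
  have e1 : (∫ s : ℝ, h (t - s) * ((s * Real.tanh (π * s) : ℝ) : ℂ))
      = ∫ s : ℝ, h s * (((t - s) * Real.tanh (π * (t - s)) : ℝ) : ℂ) := by
    have := integral_sub_left_eq_self
      (fun s : ℝ => h s * (((t - s) * Real.tanh (π * (t - s)) : ℝ) : ℂ)) volume t
    simp only [sub_sub_cancel] at this
    exact this
  -- step 2 : main term
  have e2 : ((|t| : ℝ) : ℂ) * (∫ s : ℝ, h s) - ((Real.sign t : ℝ) : ℂ) * ∫ s : ℝ, h s * (s : ℂ)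
      = ∫ s : ℝ, h s * ((Real.sign t * (t - s) : ℝ) : ℂ) := by
    have expand : (fun s : ℝ => h s * ((Real.sign t * (t - s) : ℝ) : ℂ))
        = fun s : ℝ => ((Real.sign t * t : ℝ) : ℂ) * h s
            - ((Real.sign t : ℝ) : ℂ) * (h s * (s : ℂ)) := by
      funext s; push_cast; ring
    rw [expand, integral_sub (h.integrable.const_mul _) (hint3.const_mul _),
      integral_const_mul, integral_const_mul, hσt]
  rw [e1, e2, ← integral_sub hint1 hint2]
  have e3 : (fun s : ℝ => h s * (((t - s) * Real.tanh (π * (t - s)) : ℝ) : ℂ)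
      - h s * ((Real.sign t * (t - s) : ℝ) : ℂ))
      = fun s : ℝ => h s *
          ((((t - s) * Real.tanh (π * (t - s)) - Real.sign t * (t - s)) : ℝ) : ℂ) := by
    funext s; push_cast; ring
  rw [e3]
  -- step 4 : bound
  have hIg1 : Integrable (fun s : ℝ => (1 + (t - s) ^ 2)⁻¹) :=
    integrable_inv_one_add_sq.comp_sub_left t
  have hIg : Integrable (fun s : ℝ => D * ((1 + |t|) ^ N)⁻¹
      * ((1 + (t - s) ^ 2)⁻¹ + (1 + s ^ 2)⁻¹)) :=
    (hIg1.add integrable_inv_one_add_sq).const_mul _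
  refine le_trans (norm_integral_le_of_norm_le hIg ?_) ?_
  · filter_upwards with s
    rw [norm_mul, Complex.norm_real, Real.norm_eq_abs]
    exact hbound t s ht
  · rw [integral_const_mul, integral_add hIg1 integrable_inv_one_add_sq]
    have i1 : (∫ s : ℝ, (1 + (t - s) ^ 2)⁻¹) = π := by
      have := integral_sub_left_eq_self (fun x : ℝ => (1 + x ^ 2)⁻¹) volume t
      rw [this, integral_univ_inv_one_add_sq]
    have i2 : (∫ s : ℝ, (1 + s ^ 2)⁻¹) = π := integral_univ_inv_one_add_sq
    rw [i1, i2, zpow_neg, zpow_natCast]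
    apply le_of_eq
    ring
end

section
/- Let Γ denote the complex Gamma function and let h : ℝ → ℂ be measurable with |h(u)| ≤ C₁(1 + |u|)^{−3} for all u ∈ ℝ. Then there exists C > 0 such that for all λ ≥ 2, | ∫_{−λ}^{λ} ∫_ℝ h(t − r) (Γ′/Γ)(1 + ir) dr dt | ≤ C · λ · log λ. -/
open Real MeasureTheory Complex

open Set in
private lemma deriv_Gamma_eq {s : ℂ} (hs : 0 < s.re) :
    deriv Complex.Gamma s = ∫ t : ℝ in Ioi 0, (t:ℂ) ^ (s - 1) * (Real.log t * Real.exp (-t)) := by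
  have h1 : HasDerivAt Complex.GammaIntegral
      (∫ t : ℝ in Ioi 0, (t:ℂ) ^ (s - 1) * (Real.log t * Real.exp (-t))) s :=
    Complex.hasDerivAt_GammaIntegral hs
  have h2 : Complex.Gamma =ᶠ[nhds s] Complex.GammaIntegral := by
    filter_upwards [IsOpen.mem_nhds (isOpen_lt continuous_const Complex.continuous_re) hs]
      with z hz using Complex.Gamma_eq_integral hz
  exact (h1.congr_of_eventuallyEq h2).deriv

lemma abs_self_le_abs_sinh (t : ℝ) : |t| ≤ |Real.sinh t| := by
  rcases le_or_gt 0 t with h | h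
  · rw [_root_.abs_of_nonneg h, _root_.abs_of_nonneg (Real.sinh_nonneg_iff.mpr h)]
    exact Real.self_le_sinh_iff.mpr h
  · rw [_root_.abs_of_neg h, _root_.abs_of_neg (Real.sinh_neg_iff.mpr h)]
    have := Real.self_le_sinh_iff.mpr (neg_nonneg.mpr h.le)
    rw [Real.sinh_neg] at this; linarith

lemma sq_log_le {x : ℝ} (hx : 0 < x) : (Real.log x) ^ 2 ≤ (x - 1) ^ 2 / x := by
  rw [le_div_iff₀ hx]
  set y := Real.log x with hy'
  have hy : x = Real.exp y := (Real.exp_log hx).symm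
  have he : Real.exp (y/2) * Real.exp (y/2) = x := by rw [← Real.exp_add, add_halves, hy]
  have he2 : Real.exp (y/2) * Real.exp (-y/2) = 1 := by
    rw [← Real.exp_add]; ring_nf; exact Real.exp_zero
  have h1 : x - 1 = Real.exp (y/2) * (2 * Real.sinh (y/2)) := by
    rw [Real.sinh_eq]; field_simp; rw [neg_div] at he2; linarith [he, he2]
  have h2 := abs_self_le_abs_sinh (y/2)
  have h3 : (y/2)^2 ≤ (Real.sinh (y/2))^2 := by
    rw [← _root_.sq_abs (y/2), ← _root_.sq_abs (Real.sinh (y/2))]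
    exact pow_le_pow_left₀ (abs_nonneg _) h2 2
  have hexp : 0 < Real.exp (y/2) := Real.exp_pos _
  calc y^2 * x ≤ (2 * Real.sinh (y/2))^2 * x := by nlinarith
    _ = (x-1)^2 := by rw [h1]; rw [mul_pow, mul_pow]; nlinarith [he]

lemma my_diffAt {z : ℂ} (hz : 0 < z.re) : DifferentiableAt ℂ Complex.Gamma z := by
  apply Complex.differentiableAt_Gamma
  intro m hzm
  rw [hzm] at hz; simp at hz
  have : (0:ℝ) ≤ (m:ℝ) := m.cast_nonneg
  linarith

lemma digamma_rec {z : ℂ} (hz : 0 < z.re) :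
    deriv Complex.Gamma (z+1) / Complex.Gamma (z+1)
      = deriv Complex.Gamma z / Complex.Gamma z + 1/z := by
  have hz0 : z ≠ 0 := by intro hh; rw [hh] at hz; simp at hz
  have hG : Complex.Gamma z ≠ 0 := Complex.Gamma_ne_zero_of_re_pos hz
  have hd : DifferentiableAt ℂ Complex.Gamma z := my_diffAt hz
  have h1 : HasDerivAt (fun w => Complex.Gamma (w+1)) (deriv Complex.Gamma (z+1)) z := by
    have hd1 : DifferentiableAt ℂ Complex.Gamma (z+1) :=
      my_diffAt (by simp only [Complex.add_re, Complex.one_re]; linarith)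
    have := (hd1.hasDerivAt.comp z ((hasDerivAt_id z).add_const 1))
    simp only [mul_one] at this
    exact this
  have h2 : HasDerivAt (fun w => w * Complex.Gamma w)
      (Complex.Gamma z + z * deriv Complex.Gamma z) z := by
    have := (hasDerivAt_id z).mul hd.hasDerivAt
    exact this.congr_deriv (by simp)
  have heq : (fun w : ℂ => Complex.Gamma (w+1)) =ᶠ[nhds z] (fun w => w * Complex.Gamma w) := by
    filter_upwards [isOpen_compl_singleton.mem_nhds (by simpa using hz0 :
      z ∈ ({(0:ℂ)}ᶜ : Set ℂ))] with w hw
    exact Complex.Gamma_add_one w (by simpa using hw)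
  have h2' : HasDerivAt (fun w => Complex.Gamma (w+1))
      (Complex.Gamma z + z * deriv Complex.Gamma z) z := h2.congr_of_eventuallyEq heq
  have hkey : deriv Complex.Gamma (z+1) = Complex.Gamma z + z * deriv Complex.Gamma z :=
    h1.unique h2'
  rw [hkey, Complex.Gamma_add_one z hz0]
  field_simp
  ring

lemma digamma_rec_iter {z : ℂ} (hz : 0 < z.re) (n : ℕ) :
    deriv Complex.Gamma (z+n) / Complex.Gamma (z+n)
      = deriv Complex.Gamma z / Complex.Gamma z
        + ∑ k ∈ Finset.range n, 1/(z+k) := by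
  induction n with
  | zero => simp
  | succ n ih =>
      have hre : 0 < (z + n).re := by
        simp only [Complex.add_re, Complex.natCast_re]
        positivity
      have h1 : z + (n+1 : ℕ) = (z + n) + 1 := by push_cast; ring
      rw [h1, digamma_rec hre, ih, Finset.sum_range_succ]
      ring

open Set in
lemma deriv_Gamma_bound {s : ℂ} (hs : 2 ≤ s.re) :
    ‖deriv Complex.Gamma s‖ ≤ Real.Gamma s.re * (Real.log s.re + 1) := by
  set σ := s.re with hσdef
  have hσ2 : (2:ℝ) ≤ σ := hs
  have hσ0 : (0:ℝ) < σ := by linarith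
  -- basic integrable pieces
  have int1 : IntegrableOn (fun u : ℝ => Real.exp (-u) * u ^ (σ - 1)) (Ioi 0) :=
    Real.GammaIntegral_convergent hσ0
  have int2 : IntegrableOn (fun u : ℝ => Real.exp (-u) * u ^ (σ + 1 - 1)) (Ioi 0) :=
    Real.GammaIntegral_convergent (by linarith)
  have int0 : IntegrableOn (fun u : ℝ => Real.exp (-u) * u ^ (σ - 1 - 1)) (Ioi 0) := by
    have := Real.GammaIntegral_convergent (s := σ - 1) (by linarith)
    simpa using this
  set g : ℝ → ℝ := fun u => (Real.log σ + 1/2) * (Real.exp (-u) * u ^ (σ - 1))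
    + (1/(2*σ)) * ((Real.exp (-u) * u ^ (σ + 1 - 1))
        - 2*σ*(Real.exp (-u) * u ^ (σ - 1)) + σ^2 * (Real.exp (-u) * u ^ (σ - 1 - 1)))
    with hgdef
  have hgint : IntegrableOn g (Ioi 0) := by
    apply Integrable.add
    · exact int1.const_mul _
    · exact (((int2.sub (int1.const_mul _)).add (int0.const_mul _)).const_mul _)
  -- pointwise bound
  have hpt : ∀ u : ℝ, u ∈ Ioi (0:ℝ) →
      ‖(u:ℂ) ^ (s - 1) * (Real.log u * Real.exp (-u))‖ ≤ g u := by
    intro u hu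
    have hu0 : (0:ℝ) < u := hu
    have hnorm : ‖(u:ℂ) ^ (s - 1) * (Real.log u * Real.exp (-u))‖
        = u ^ (σ - 1) * (|Real.log u| * Real.exp (-u)) := by
      rw [norm_mul, norm_mul, Complex.norm_cpow_eq_rpow_re_of_pos hu0,
        Complex.norm_real, Complex.norm_real, Real.norm_eq_abs, Real.norm_eq_abs, Real.abs_exp]
      simp only [Complex.sub_re, Complex.one_re]
      rfl
    rw [hnorm]
    have hlogσ : 0 ≤ Real.log σ := Real.log_nonneg (by linarith)
    have hq : (Real.log (u/σ))^2 ≤ (u-σ)^2/(σ*u) := by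
      have h1 := sq_log_le (x := u/σ) (by positivity)
      have h2 : (u/σ - 1)^2 / (u/σ) = (u-σ)^2/(σ*u) := by
        field_simp
      rw [h2] at h1; exact h1
    have habs : |Real.log u| ≤ Real.log σ + (1/2 + (u-σ)^2/(2*(σ*u))) := by
      have h1 : Real.log u = Real.log σ + Real.log (u/σ) := by
        rw [Real.log_div hu0.ne' hσ0.ne']; ring
      have h2 : |Real.log u| ≤ Real.log σ + |Real.log (u/σ)| := by
        rw [h1]
        calc |Real.log σ + Real.log (u/σ)| ≤ |Real.log σ| + |Real.log (u/σ)| := abs_add_le _ _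
          _ = Real.log σ + |Real.log (u/σ)| := by rw [_root_.abs_of_nonneg hlogσ]
      have h3 : |Real.log (u/σ)| ≤ 1/2 + (Real.log (u/σ))^2/2 := by
        nlinarith [sq_nonneg (|Real.log (u/σ)| - 1), _root_.sq_abs (Real.log (u/σ))]
      have e24 : (u-σ)^2/(2*(σ*u)) = ((u-σ)^2/(σ*u))/2 := by ring
      have h4 : (Real.log (u/σ))^2/2 ≤ (u-σ)^2/(2*(σ*u)) := by rw [e24]; linarith [hq]
      linarith
    -- rpow algebra
    have e1 : u ^ (σ+1-1) = u^(σ-1) * u := by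
      rw [show σ+1-1 = (σ-1)+1 by ring, Real.rpow_add_one hu0.ne']
    have e2 : u ^ (σ-1-1) = u^(σ-1) / u := by
      rw [show σ-1-1 = (σ-1)-1 by ring, Real.rpow_sub_one hu0.ne']
    have hrp : (0:ℝ) < u ^ (σ-1) := Real.rpow_pos_of_pos hu0 _
    have hep : (0:ℝ) < Real.exp (-u) := Real.exp_pos _
    rw [hgdef]
    simp only
    rw [e1, e2]
    have expand : (Real.exp (-u) * (u^(σ-1)*u)) - 2*σ*(Real.exp (-u) * u^(σ-1))
        + σ^2 * (Real.exp (-u) * (u^(σ-1)/u))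
        = Real.exp (-u) * u^(σ-1) * ((u-σ)^2/u) := by
      field_simp
      ring
    rw [expand]
    have key : u ^ (σ-1) * |Real.log u| ≤ u^(σ-1) * (Real.log σ + (1/2 + (u-σ)^2/(2*(σ*u)))) := by
      exact mul_le_mul_of_nonneg_left habs hrp.le
    have final : u^(σ-1) * (Real.log σ + (1/2 + (u-σ)^2/(2*(σ*u))))
        = (Real.log σ + 1/2) * u^(σ-1) + (1/(2*σ)) * (u^(σ-1) * ((u-σ)^2/u)) := by
      field_simp
      ring
    calc u ^ (σ - 1) * (|Real.log u| * Real.exp (-u))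
        = (u ^ (σ-1) * |Real.log u|) * Real.exp (-u) := by ring
      _ ≤ (u^(σ-1) * (Real.log σ + (1/2 + (u-σ)^2/(2*(σ*u))))) * Real.exp (-u) :=
          mul_le_mul_of_nonneg_right key hep.le
      _ = (Real.log σ + 1/2) * (Real.exp (-u) * u ^ (σ - 1))
          + 1/(2*σ) * (Real.exp (-u) * u^(σ-1) * ((u-σ)^2/u)) := by rw [final]; ring
      _ = _ := by ring
  -- integral of g
  have hΓ : Real.Gamma σ = ∫ u in Ioi (0:ℝ), Real.exp (-u) * u ^ (σ - 1) :=
    Real.Gamma_eq_integral hσ0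
  have hΓ1 : Real.Gamma (σ+1) = ∫ u in Ioi (0:ℝ), Real.exp (-u) * u ^ (σ + 1 - 1) :=
    Real.Gamma_eq_integral (by linarith)
  have hΓ0 : Real.Gamma (σ-1) = ∫ u in Ioi (0:ℝ), Real.exp (-u) * u ^ (σ - 1 - 1) := by
    have := Real.Gamma_eq_integral (s := σ-1) (by linarith)
    simpa using this
  have intA : IntegrableOn (fun u : ℝ => (Real.log σ + 1/2) * (Real.exp (-u) * u ^ (σ-1)))
      (Ioi 0) := int1.const_mul _
  have intS : IntegrableOn (fun u : ℝ => Real.exp (-u) * u ^ (σ+1-1)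
      - 2*σ*(Real.exp (-u) * u ^ (σ-1))) (Ioi 0) := int2.sub (int1.const_mul _)
  have intB0 : IntegrableOn (fun u : ℝ => Real.exp (-u) * u ^ (σ+1-1)
      - 2*σ*(Real.exp (-u) * u ^ (σ-1)) + σ^2 * (Real.exp (-u) * u ^ (σ-1-1))) (Ioi 0) :=
    intS.add (int0.const_mul _)
  have intB : IntegrableOn (fun u : ℝ => (1/(2*σ)) * (Real.exp (-u) * u ^ (σ+1-1)
      - 2*σ*(Real.exp (-u) * u ^ (σ-1)) + σ^2 * (Real.exp (-u) * u ^ (σ-1-1)))) (Ioi 0) :=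
    intB0.const_mul _
  have hgval : ∫ u in Ioi (0:ℝ), g u = (Real.log σ + 1/2) * Real.Gamma σ
      + (1/(2*σ)) * (Real.Gamma (σ+1) - 2*σ*Real.Gamma σ + σ^2 * Real.Gamma (σ-1)) := by
    calc ∫ u in Ioi (0:ℝ), g u
        = ∫ u in Ioi (0:ℝ), ((Real.log σ + 1/2) * (Real.exp (-u) * u ^ (σ-1))
          + (1/(2*σ)) * (Real.exp (-u) * u ^ (σ+1-1) - 2*σ*(Real.exp (-u) * u ^ (σ-1))
            + σ^2 * (Real.exp (-u) * u ^ (σ-1-1)))) := rfl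
      _ = _ := by
        rw [integral_add intA intB, integral_const_mul _ _, integral_const_mul _ _,
          integral_add intS (int0.const_mul _),
          integral_sub int2 (int1.const_mul _), integral_const_mul _ _, integral_const_mul _ _,
          ← hΓ, ← hΓ1, ← hΓ0]
  -- Gamma recurrences
  have hrec : Real.Gamma σ = (σ-1) * Real.Gamma (σ-1) := by
    have := Real.Gamma_add_one (s := σ-1) (by linarith)
    rw [show σ-1+1 = σ by ring] at this
    exact this
  have hrec1 : Real.Gamma (σ+1) = σ * Real.Gamma σ := by
    have := Real.Gamma_add_one (s := σ) hσ0.ne'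
    exact this
  have hΓpos : 0 < Real.Gamma σ := Real.Gamma_pos_of_pos hσ0
  have hΓ0pos : 0 < Real.Gamma (σ-1) := Real.Gamma_pos_of_pos (by linarith)
  calc ‖deriv Complex.Gamma s‖
      = ‖∫ t : ℝ in Ioi 0, (t:ℂ) ^ (s - 1) * (Real.log t * Real.exp (-t))‖ := by
        rw [deriv_Gamma_eq (by linarith : 0 < s.re)]
    _ ≤ ∫ t : ℝ in Ioi 0, ‖(t:ℂ) ^ (s - 1) * (Real.log t * Real.exp (-t))‖ :=
        norm_integral_le_integral_norm _
    _ ≤ ∫ u in Ioi (0:ℝ), g u := by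
        apply integral_mono_of_nonneg
        · exact ae_of_all _ fun u => norm_nonneg _
        · exact hgint
        · filter_upwards [ae_restrict_mem measurableSet_Ioi] with u hu using hpt u hu
    _ ≤ Real.Gamma σ * (Real.log σ + 1) := by
        rw [hgval, hrec1, hrec]
        have expand2 : (Real.log σ + 1/2) * ((σ-1) * Real.Gamma (σ-1))
            + (1/(2*σ)) * (σ * ((σ-1)*Real.Gamma (σ-1)) - 2*σ*((σ-1)*Real.Gamma (σ-1))
              + σ^2 * Real.Gamma (σ-1))
            = (σ-1) * Real.Gamma (σ-1) * (Real.log σ + 1/2) + Real.Gamma (σ-1)/2 := by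
          field_simp
          ring
        rw [expand2]
        have : Real.Gamma (σ-1) ≤ (σ-1) * Real.Gamma (σ-1) := by nlinarith
        nlinarith

open Set in
lemma Gamma_lower_bound {s : ℂ} (hs : 2 ≤ s.re) :
    Real.Gamma s.re * (1 - s.im^2/(2*(s.re-1))) ≤ ‖Complex.Gamma s‖ := by
  set σ := s.re with hσdef
  set r := s.im with hrdef
  have hσ2 : (2:ℝ) ≤ σ := hs
  have hσ0 : (0:ℝ) < σ := by linarith
  have int1 : IntegrableOn (fun u : ℝ => Real.exp (-u) * u ^ (σ - 1)) (Ioi 0) :=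
    Real.GammaIntegral_convergent hσ0
  have int2 : IntegrableOn (fun u : ℝ => Real.exp (-u) * u ^ (σ + 1 - 1)) (Ioi 0) :=
    Real.GammaIntegral_convergent (by linarith)
  have int0 : IntegrableOn (fun u : ℝ => Real.exp (-u) * u ^ (σ - 1 - 1)) (Ioi 0) := by
    have := Real.GammaIntegral_convergent (s := σ - 1) (by linarith)
    simpa using this
  have intC : IntegrableOn (fun u : ℝ => (↑(Real.exp (-u)) * (u:ℂ) ^ (s-1))) (Ioi 0) :=
    Complex.GammaIntegral_convergent (by linarith : 0 < s.re)
  set c : ℂ := Complex.exp (-(↑(r * Real.log σ)) * Complex.I) with hcdef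
  have hcabs : ‖c‖ = 1 := by
    rw [hcdef, Complex.norm_exp]
    simp
  -- pointwise identity
  have hid : ∀ u : ℝ, u ∈ Ioi (0:ℝ) →
      (c * (↑(Real.exp (-u)) * (u:ℂ) ^ (s-1))).re
        = Real.exp (-u) * u ^ (σ-1) * Real.cos (r * (Real.log u - Real.log σ)) := by
    intro u hu
    have hu0 : (0:ℝ) < u := hu
    have hlog : Complex.log (u:ℂ) = (Real.log u : ℂ) := (Complex.ofReal_log hu0.le).symm
    have hs1 : s - 1 = (↑(σ-1) + ↑r * Complex.I) := by
      apply Complex.ext <;> simp [hσdef, hrdef]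
    have hcpow : (u:ℂ) ^ (s-1)
        = ↑(u ^ (σ-1) : ℝ) * Complex.exp (↑(r * Real.log u) * Complex.I) := by
      rw [Complex.cpow_def_of_ne_zero (Complex.ofReal_ne_zero.mpr hu0.ne'), hlog, hs1]
      rw [show (↑(Real.log u) : ℂ) * (↑(σ-1) + ↑r * Complex.I)
          = ↑((σ-1) * Real.log u) + ↑(r * Real.log u) * Complex.I by push_cast; ring]
      rw [Complex.exp_add]
      congr 1
      rw [Real.rpow_def_of_pos hu0, ← Complex.ofReal_exp]
      congr 1
      ring
    rw [hcpow, hcdef]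
    have e3 : (↑(r * Real.log u) : ℂ) * Complex.I + -(↑(r * Real.log σ)) * Complex.I
        = ↑(r * (Real.log u - Real.log σ)) * Complex.I := by push_cast; ring
    have key : Complex.exp (-(↑(r * Real.log σ)) * Complex.I)
        * (↑(Real.exp (-u)) * (↑(u ^ (σ-1) : ℝ) * Complex.exp (↑(r * Real.log u) * Complex.I)))
        = ↑(Real.exp (-u) * u ^ (σ-1)) * Complex.exp (↑(r * (Real.log u - Real.log σ)) * Complex.I) := by
      calc Complex.exp (-(↑(r * Real.log σ)) * Complex.I)
          * (↑(Real.exp (-u)) * (↑(u ^ (σ-1) : ℝ) * Complex.exp (↑(r * Real.log u) * Complex.I)))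
          = ↑(Real.exp (-u) * u ^ (σ-1))
            * (Complex.exp (↑(r * Real.log u) * Complex.I)
              * Complex.exp (-(↑(r * Real.log σ)) * Complex.I)) := by push_cast; ring
        _ = ↑(Real.exp (-u) * u ^ (σ-1))
            * Complex.exp (↑(r * (Real.log u - Real.log σ)) * Complex.I) := by
            rw [← Complex.exp_add, e3]
    rw [key, Complex.re_ofReal_mul, Complex.exp_ofReal_mul_I_re]
  -- integrability of the re-function and of the lower bound
  have intRe : IntegrableOn (fun u : ℝ => (c * (↑(Real.exp (-u)) * (u:ℂ) ^ (s-1))).re) (Ioi 0) :=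
    (intC.const_mul c).re
  have intS : IntegrableOn (fun u : ℝ => Real.exp (-u) * u ^ (σ+1-1)
      - 2*σ*(Real.exp (-u) * u ^ (σ-1))) (Ioi 0) := int2.sub (int1.const_mul _)
  have intB0 : IntegrableOn (fun u : ℝ => Real.exp (-u) * u ^ (σ+1-1)
      - 2*σ*(Real.exp (-u) * u ^ (σ-1)) + σ^2 * (Real.exp (-u) * u ^ (σ-1-1))) (Ioi 0) :=
    intS.add (int0.const_mul _)
  have intLow : IntegrableOn (fun u : ℝ => Real.exp (-u) * u ^ (σ-1)
      - (r^2/(2*σ)) * (Real.exp (-u) * u ^ (σ+1-1) - 2*σ*(Real.exp (-u) * u ^ (σ-1))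
        + σ^2 * (Real.exp (-u) * u ^ (σ-1-1)))) (Ioi 0) := int1.sub (intB0.const_mul _)
  -- pointwise lower bound
  have hpt : ∀ u : ℝ, u ∈ Ioi (0:ℝ) →
      Real.exp (-u) * u ^ (σ-1)
      - (r^2/(2*σ)) * (Real.exp (-u) * u ^ (σ+1-1) - 2*σ*(Real.exp (-u) * u ^ (σ-1))
        + σ^2 * (Real.exp (-u) * u ^ (σ-1-1)))
      ≤ (c * (↑(Real.exp (-u)) * (u:ℂ) ^ (s-1))).re := by
    intro u hu
    have hu0 : (0:ℝ) < u := hu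
    rw [hid u hu]
    have e1 : u ^ (σ+1-1) = u^(σ-1) * u := by
      rw [show σ+1-1 = (σ-1)+1 by ring, Real.rpow_add_one hu0.ne']
    have e2 : u ^ (σ-1-1) = u^(σ-1) / u := by
      rw [show σ-1-1 = (σ-1)-1 by ring, Real.rpow_sub_one hu0.ne']
    have hrp : (0:ℝ) < u ^ (σ-1) := Real.rpow_pos_of_pos hu0 _
    have hep : (0:ℝ) < Real.exp (-u) := Real.exp_pos _
    have hcos : 1 - (r * (Real.log u - Real.log σ))^2/2 ≤ Real.cos (r * (Real.log u - Real.log σ)) :=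
      Real.one_sub_sq_div_two_le_cos
    have hq : (Real.log u - Real.log σ)^2 ≤ (u-σ)^2/(σ*u) := by
      have h0 : Real.log u - Real.log σ = Real.log (u/σ) := (Real.log_div hu0.ne' hσ0.ne').symm
      have h1 := sq_log_le (x := u/σ) (by positivity)
      have h2 : (u/σ - 1)^2 / (u/σ) = (u-σ)^2/(σ*u) := by
        field_simp
      rw [h0]; rw [h2] at h1; exact h1
    rw [e1, e2]
    have expand : (Real.exp (-u) * (u^(σ-1)*u)) - 2*σ*(Real.exp (-u) * u^(σ-1))
        + σ^2 * (Real.exp (-u) * (u^(σ-1)/u))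
        = Real.exp (-u) * u^(σ-1) * ((u-σ)^2/u) := by
      field_simp; ring
    rw [expand]
    have step1 : Real.exp (-u) * u^(σ-1) - (r^2/(2*σ)) * (Real.exp (-u) * u^(σ-1) * ((u-σ)^2/u))
        ≤ Real.exp (-u) * u^(σ-1) * (1 - (r * (Real.log u - Real.log σ))^2/2) := by
      have h3 : (r * (Real.log u - Real.log σ))^2 ≤ r^2 * ((u-σ)^2/(σ*u)) := by
        rw [mul_pow]
        exact mul_le_mul_of_nonneg_left hq (sq_nonneg r)
      have h4 : Real.exp (-u) * u^(σ-1) * ((r * (Real.log u - Real.log σ))^2/2)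
          ≤ Real.exp (-u) * u^(σ-1) * (r^2 * ((u-σ)^2/(σ*u))/2) := by
        apply mul_le_mul_of_nonneg_left _ (by positivity)
        linarith
      have h5 : Real.exp (-u) * u^(σ-1) * (r^2 * ((u-σ)^2/(σ*u))/2)
          = (r^2/(2*σ)) * (Real.exp (-u) * u^(σ-1) * ((u-σ)^2/u)) := by
        field_simp
      nlinarith [h4, h5]
    calc _ ≤ Real.exp (-u) * u^(σ-1) * (1 - (r * (Real.log u - Real.log σ))^2/2) := step1
      _ ≤ Real.exp (-u) * u ^ (σ-1) * Real.cos (r * (Real.log u - Real.log σ)) :=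
        mul_le_mul_of_nonneg_left hcos (by positivity)
  -- Gamma values
  have hΓ : Real.Gamma σ = ∫ u in Ioi (0:ℝ), Real.exp (-u) * u ^ (σ - 1) :=
    Real.Gamma_eq_integral hσ0
  have hΓ1 : Real.Gamma (σ+1) = ∫ u in Ioi (0:ℝ), Real.exp (-u) * u ^ (σ + 1 - 1) :=
    Real.Gamma_eq_integral (by linarith)
  have hΓ0 : Real.Gamma (σ-1) = ∫ u in Ioi (0:ℝ), Real.exp (-u) * u ^ (σ - 1 - 1) := by
    have := Real.Gamma_eq_integral (s := σ-1) (by linarith)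
    simpa using this
  -- value of lower integral
  have hlowval : ∫ u in Ioi (0:ℝ), (Real.exp (-u) * u ^ (σ-1)
      - (r^2/(2*σ)) * (Real.exp (-u) * u ^ (σ+1-1) - 2*σ*(Real.exp (-u) * u ^ (σ-1))
        + σ^2 * (Real.exp (-u) * u ^ (σ-1-1))))
      = Real.Gamma σ - (r^2/(2*σ)) * (Real.Gamma (σ+1) - 2*σ*Real.Gamma σ + σ^2*Real.Gamma (σ-1)) := by
    rw [integral_sub int1 (intB0.const_mul _), integral_const_mul _ _,
      integral_add intS (int0.const_mul _), integral_sub int2 (int1.const_mul _),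
      integral_const_mul _ _, integral_const_mul _ _, ← hΓ, ← hΓ1, ← hΓ0]
  -- re of integral
  have hre : (c * Complex.Gamma s).re
      = ∫ u in Ioi (0:ℝ), (c * (↑(Real.exp (-u)) * (u:ℂ) ^ (s-1))).re := by
    rw [Complex.Gamma_eq_integral (by linarith : 0 < s.re), Complex.GammaIntegral,
      ← integral_const_mul _ _]
    exact (integral_re ((intC.const_mul c))).symm
  -- combine
  have hmain : Real.Gamma σ - (r^2/(2*σ)) * (Real.Gamma (σ+1) - 2*σ*Real.Gamma σ + σ^2*Real.Gamma (σ-1))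
      ≤ (c * Complex.Gamma s).re := by
    rw [hre, ← hlowval]
    apply integral_mono_ae intLow intRe
    filter_upwards [ae_restrict_mem measurableSet_Ioi] with u hu using hpt u hu
  have hrecomb : Real.Gamma σ - (r^2/(2*σ)) * (Real.Gamma (σ+1) - 2*σ*Real.Gamma σ + σ^2*Real.Gamma (σ-1))
      = Real.Gamma σ * (1 - r^2/(2*(σ-1))) := by
    have hrec : Real.Gamma σ = (σ-1) * Real.Gamma (σ-1) := by
      have := Real.Gamma_add_one (s := σ-1) (by linarith : σ - 1 ≠ 0)
      rw [show σ-1+1 = σ by ring] at this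
      exact this
    have hrec1 : Real.Gamma (σ+1) = σ * Real.Gamma σ := Real.Gamma_add_one hσ0.ne'
    have h1 : σ - 1 ≠ 0 := ne_of_gt (by linarith : (0:ℝ) < σ - 1)
    have hΓ0eq : Real.Gamma (σ-1) = Real.Gamma σ / (σ-1) := by
      rw [hrec]; field_simp
    rw [hrec1, hΓ0eq]
    field_simp
    ring
  have hfin : (c * Complex.Gamma s).re ≤ ‖Complex.Gamma s‖ := by
    calc (c * Complex.Gamma s).re ≤ ‖c * Complex.Gamma s‖ := Complex.re_le_norm _
      _ = ‖c‖ * ‖Complex.Gamma s‖ := norm_mul _ _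
      _ = ‖Complex.Gamma s‖ := by rw [hcabs, one_mul]
  linarith [hmain, hrecomb ▸ hmain, hfin]

lemma digamma_line_bound (r : ℝ) :
    ‖deriv Complex.Gamma (1 + Complex.I * r) / Complex.Gamma (1 + Complex.I * r)‖
      ≤ 11 * Real.log (2 + |r|) := by
  set z : ℂ := 1 + Complex.I * r with hzdef
  have hzre : z.re = 1 := by simp [hzdef]
  have hzim : z.im = r := by simp [hzdef]
  set n : ℕ := ⌈r^2⌉₊ + 1 with hndef
  have hn1 : 1 ≤ n := Nat.le_add_left 1 _
  have hn1' : (1:ℝ) ≤ (n:ℝ) := by exact_mod_cast hn1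
  have hrn : r^2 ≤ (n:ℝ) := le_trans (Nat.le_ceil _) (by exact_mod_cast Nat.le_succ _)
  have hnr : (n:ℝ) ≤ r^2 + 2 := by
    have h1 : (⌈r^2⌉₊ : ℝ) ≤ r^2 + 1 := le_of_lt (Nat.ceil_lt_add_one (by positivity))
    push_cast [hndef]
    linarith
  set s : ℂ := z + n with hsdef
  have hsre : s.re = (n:ℝ) + 1 := by simp [hsdef, hzre]; ring
  have hsim : s.im = r := by simp [hsdef, hzim]
  have hs2 : 2 ≤ s.re := by rw [hsre]; linarith
  set σ : ℝ := s.re with hσdef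
  have hσn : σ = (n:ℝ) + 1 := hsre
  have hσ2 : (2:ℝ) ≤ σ := hs2
  have hΓpos : 0 < Real.Gamma σ := Real.Gamma_pos_of_pos (by linarith)
  have hlogσ0 : 0 ≤ Real.log σ := Real.log_nonneg (by linarith)
  -- lower bound on denominator
  have hden : Real.Gamma σ / 2 ≤ ‖Complex.Gamma s‖ := by
    have h1 := Gamma_lower_bound hs2
    have h2 : 1 - s.im^2/(2*(s.re-1)) ≥ 1/2 := by
      rw [hsim, ← hσdef, hσn]
      have h3 : r^2/(2*(n:ℝ)) ≤ 1/2 := by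
        rw [div_le_iff₀ (by positivity)]
        nlinarith
      have h4 : ((n:ℝ) + 1 - 1) = (n:ℝ) := by ring
      rw [h4]
      linarith
    calc Real.Gamma σ / 2 ≤ Real.Gamma σ * (1 - s.im^2/(2*(s.re-1))) := by nlinarith
      _ ≤ ‖Complex.Gamma s‖ := h1
  have hdenpos : 0 < ‖Complex.Gamma s‖ := lt_of_lt_of_le (by positivity) hden
  -- bound on ψ(s)
  have hψs : ‖deriv Complex.Gamma s / Complex.Gamma s‖ ≤ 2 * (Real.log σ + 1) := by
    rw [norm_div]
    have hnum := deriv_Gamma_bound hs2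
    calc ‖deriv Complex.Gamma s‖ / ‖Complex.Gamma s‖
        ≤ (Real.Gamma σ * (Real.log σ + 1)) / (Real.Gamma σ / 2) :=
          div_le_div₀ (mul_nonneg hΓpos.le (by linarith)) hnum (by positivity) hden
      _ = 2 * (Real.log σ + 1) := by field_simp
  -- bound on the sum
  have hsum : ‖∑ k ∈ Finset.range n, 1/(z+k)‖ ≤ 1 + Real.log n := by
    have h1 : ‖∑ k ∈ Finset.range n, 1/(z+k)‖ ≤ ∑ k ∈ Finset.range n, ((k:ℝ)+1)⁻¹ := by
      refine le_trans (norm_sum_le _ _) (Finset.sum_le_sum fun k _ => ?_)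
      rw [norm_div, norm_one]
      have habs : (k:ℝ)+1 ≤ ‖z + k‖ := by
        have hre2 : (z + k).re = 1 + k := by simp [hzre]
        calc (k:ℝ)+1 = (z+k).re := by rw [hre2]; ring
          _ ≤ |(z+k).re| := le_abs_self _
          _ ≤ ‖z+k‖ := Complex.abs_re_le_norm _
      rw [one_div]
      exact inv_anti₀ (by positivity) habs
    have h2 : ∑ k ∈ Finset.range n, ((k:ℝ)+1)⁻¹ = ((harmonic n : ℚ) : ℝ) := by
      rw [harmonic]
      push_cast
      rfl
    calc ‖∑ k ∈ Finset.range n, 1/(z+k)‖ ≤ ∑ k ∈ Finset.range n, ((k:ℝ)+1)⁻¹ := h1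
      _ = ((harmonic n : ℚ) : ℝ) := h2
      _ ≤ 1 + Real.log n := harmonic_le_one_add_log n
  -- recurrence
  have hrec := digamma_rec_iter (z := z) (by rw [hzre]; exact one_pos) n
  have hψz : deriv Complex.Gamma z / Complex.Gamma z
      = deriv Complex.Gamma s / Complex.Gamma s - ∑ k ∈ Finset.range n, 1/(z+k) := by
    rw [hsdef, hrec]
    ring
  -- numerics
  set L := Real.log (2 + |r|) with hLdef
  have hsq : σ ≤ (2+|r|)^2 := by
    nlinarith [abs_nonneg r, hnr, hσn, _root_.sq_abs r]
  have hσpos : (0:ℝ) < σ := by linarith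
  have hL2 : Real.log σ ≤ 2 * L := by
    calc Real.log σ ≤ Real.log ((2+|r|)^2) := Real.log_le_log hσpos hsq
      _ = 2 * L := by rw [Real.log_pow]; push_cast; ring
  have hLn : Real.log n ≤ 2 * L := by
    have h1 : Real.log n ≤ Real.log σ := Real.log_le_log (by linarith) (by linarith [hσn])
    linarith
  have hL1 : Real.log 2 ≤ L := Real.log_le_log (by norm_num) (by linarith [abs_nonneg r])
  have hlog2 : (0.6931471803:ℝ) < Real.log 2 := Real.log_two_gt_d9
  calc ‖deriv Complex.Gamma z / Complex.Gamma z‖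
      = ‖deriv Complex.Gamma s / Complex.Gamma s - ∑ k ∈ Finset.range n, 1/(z+k)‖ := by
        rw [hψz]
    _ ≤ ‖deriv Complex.Gamma s / Complex.Gamma s‖ + ‖∑ k ∈ Finset.range n, 1/(z+k)‖ :=
        norm_sub_le _ _
    _ ≤ 2 * (Real.log σ + 1) + (1 + Real.log n) := add_le_add hψs hsum
    _ ≤ 11 * L := by nlinarith [hL2, hLn, hL1, hlog2]

/-- The double integral of the smoothed digamma function `Γ'/Γ(1 + ir)` is
`O(λ log λ)`. -/
theorem double_integral_digamma_bound (h : ℝ → ℂ)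
    (hmeas : Measurable h) (C₁ : ℝ)
    (hdecay : ∀ u : ℝ, ‖h u‖ ≤ C₁ * (1 + |u|) ^ (-3 : ℤ)) :
    ∃ C : ℝ, 0 < C ∧ ∀ lam : ℝ, 2 ≤ lam →
      ‖∫ t in (-lam)..lam, ∫ r : ℝ, h (t - r) *
          (deriv Complex.Gamma (1 + Complex.I * r)
            / Complex.Gamma (1 + Complex.I * r))‖
        ≤ C * lam * Real.log lam := by
  have hC₁ : 0 ≤ C₁ := by
    have := hdecay 0
    have h0 : ((1:ℝ) + |(0:ℝ)|) ^ (-3 : ℤ) = 1 := by norm_num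
    rw [h0] at this
    simpa using le_trans (norm_nonneg _) this
  have hbase : Integrable (fun v : ℝ => ((1:ℝ)+v^2)⁻¹) := integrable_inv_one_add_sq
  -- inner integral bound
  have inner_bound : ∀ t : ℝ,
      ‖∫ r : ℝ, h (t - r) * (deriv Complex.Gamma (1 + Complex.I * r)
          / Complex.Gamma (1 + Complex.I * r))‖
        ≤ 11 * C₁ * (1 + Real.log (2+|t|)) * Real.pi := by
    intro t
    set Lt := Real.log (2+|t|) with hLtdef
    have hLt0 : 0 ≤ Lt := Real.log_nonneg (by linarith [abs_nonneg t])
    set D := 11 * C₁ * (1 + Lt) with hDdef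
    have hD0 : 0 ≤ D := by positivity
    have hint : Integrable (fun r : ℝ => D * ((1:ℝ)+(t-r)^2)⁻¹) := by
      have h1 : Integrable (fun r : ℝ => ((1:ℝ)+(t-r)^2)⁻¹) :=
        (integrable_comp_sub_left (fun v : ℝ => ((1:ℝ)+v^2)⁻¹) t).mpr hbase
      exact h1.const_mul D
    have hptw : ∀ r : ℝ, ‖h (t - r) * (deriv Complex.Gamma (1 + Complex.I * r)
        / Complex.Gamma (1 + Complex.I * r))‖ ≤ D * ((1:ℝ)+(t-r)^2)⁻¹ := by
      intro r
      set a := |t - r| with hadef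
      have ha0 : 0 ≤ a := abs_nonneg _
      have hP0 : (0:ℝ) < (1+a)^3 := by positivity
      have hQ0 : (0:ℝ) < 1+(t-r)^2 := by positivity
      have hzp : ((1:ℝ) + a) ^ (-3 : ℤ) = ((1+a)^3)⁻¹ := by
        rw [zpow_neg]
        norm_cast
      have hX : Real.log (2+|r|) ≤ Lt + (1 + a) := by
        have h1 : 2+|r| ≤ (2+|t|)*(2+a) := by
          have : |r| ≤ |t| + a := by
            rw [hadef]
            calc |r| = |t - (t - r)| := by ring_nf
              _ ≤ |t| + |t-r| := abs_sub _ _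
          nlinarith [abs_nonneg t, abs_nonneg r]
        have h2 : Real.log (2+|r|) ≤ Real.log ((2+|t|)*(2+a)) :=
          Real.log_le_log (by linarith [abs_nonneg r]) h1
        have h3 : Real.log ((2+|t|)*(2+a)) = Lt + Real.log (2+a) := by
          rw [Real.log_mul (by linarith [abs_nonneg t]) (by linarith)]
        have h4 : Real.log (2+a) ≤ 1 + a := by
          have := Real.log_le_sub_one_of_pos (x := 2+a) (by linarith)
          linarith
        linarith
      have hX0 : 0 ≤ Real.log (2+|r|) := Real.log_nonneg (by linarith [abs_nonneg r])
      calc ‖h (t - r) * (deriv Complex.Gamma (1 + Complex.I * r)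
            / Complex.Gamma (1 + Complex.I * r))‖
          = ‖h (t-r)‖ * ‖deriv Complex.Gamma (1 + Complex.I * r)
            / Complex.Gamma (1 + Complex.I * r)‖ := norm_mul _ _
        _ ≤ (C₁ * ((1+a)^3)⁻¹) * (11 * Real.log (2+|r|)) := by
            apply mul_le_mul _ (digamma_line_bound r) (norm_nonneg _) _
            · rw [← hzp]; exact hdecay (t-r)
            · positivity
        _ = (C₁ * (11 * Real.log (2+|r|))) / (1+a)^3 := by ring
        _ ≤ D / (1+(t-r)^2) := by
            rw [div_le_div_iff₀ hP0 hQ0, hDdef, ← _root_.sq_abs (t-r), ← hadef]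
            set X := Real.log (2+|r|) with hXdef
            have hs1 : X ≤ (1+Lt)*(1+a) := by nlinarith [mul_nonneg hLt0 ha0]
            have hs2 : (1+a^2)*(1+a) ≤ (1+a)^3 := by nlinarith [ha0, sq_nonneg a]
            have hcoef : (0:ℝ) ≤ 11 * C₁ * (1+a^2) := by positivity
            have hcoef2 : (0:ℝ) ≤ 11*C₁*(1+Lt) :=
              mul_nonneg (mul_nonneg (by norm_num) hC₁) (by linarith)
            have hA : C₁ * (11 * X) * (1+a^2) = (11*C₁*(1+a^2)) * X := by ring
            have hB : (11*C₁*(1+a^2))*X ≤ (11*C₁*(1+a^2))*((1+Lt)*(1+a)) :=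
              mul_le_mul_of_nonneg_left hs1 hcoef
            have hC2 : (11*C₁*(1+a^2))*((1+Lt)*(1+a)) = (11*C₁*(1+Lt))*((1+a^2)*(1+a)) := by
              ring
            have hD2 : (11*C₁*(1+Lt))*((1+a^2)*(1+a)) ≤ (11*C₁*(1+Lt))*(1+a)^3 :=
              mul_le_mul_of_nonneg_left hs2 hcoef2
            calc C₁ * (11 * X) * (1+a^2) = (11*C₁*(1+a^2)) * X := hA
              _ ≤ (11*C₁*(1+a^2))*((1+Lt)*(1+a)) := hB
              _ = (11*C₁*(1+Lt))*((1+a^2)*(1+a)) := hC2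
              _ ≤ (11*C₁*(1+Lt))*(1+a)^3 := hD2
              _ = 11*C₁*(1+Lt)*(1+a)^3 := by ring
        _ = D * ((1:ℝ)+(t-r)^2)⁻¹ := by rw [div_eq_mul_inv]
    calc ‖∫ r : ℝ, h (t - r) * (deriv Complex.Gamma (1 + Complex.I * r)
          / Complex.Gamma (1 + Complex.I * r))‖
        ≤ ∫ r : ℝ, ‖h (t - r) * (deriv Complex.Gamma (1 + Complex.I * r)
          / Complex.Gamma (1 + Complex.I * r))‖ := norm_integral_le_integral_norm _
      _ ≤ ∫ r : ℝ, D * ((1:ℝ)+(t-r)^2)⁻¹ := by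
          apply integral_mono_of_nonneg (ae_of_all _ fun r => norm_nonneg _) hint
          exact ae_of_all _ hptw
      _ = D * Real.pi := by
          rw [integral_const_mul _ _]
          congr 1
          rw [integral_sub_left_eq_self (fun v : ℝ => ((1:ℝ)+v^2)⁻¹) volume t]
          exact integral_univ_inv_one_add_sq
      _ = 11 * C₁ * (1 + Lt) * Real.pi := by rw [hDdef]
  refine ⟨88 * Real.pi * (C₁ + 1) + 1, by positivity, fun lam hlam => ?_⟩
  have hloglam : Real.log 2 ≤ Real.log lam := Real.log_le_log (by norm_num) hlam
  have hlog2 : (0.6931471803:ℝ) < Real.log 2 := Real.log_two_gt_d9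
  have hM : ∀ t ∈ Set.uIoc (-lam) lam,
      ‖∫ r : ℝ, h (t - r) * (deriv Complex.Gamma (1 + Complex.I * r)
          / Complex.Gamma (1 + Complex.I * r))‖ ≤ 44 * Real.pi * C₁ * Real.log lam := by
    intro t ht
    rw [Set.uIoc_of_le (by linarith : -lam ≤ lam)] at ht
    have habs : |t| ≤ lam := abs_le.mpr ⟨ht.1.le, ht.2⟩
    have h1 : Real.log (2+|t|) ≤ Real.log (lam^2) := by
      apply Real.log_le_log (by linarith [abs_nonneg t])
      nlinarith [abs_nonneg t]
    have h2 : Real.log (lam^2) = 2 * Real.log lam := by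
      rw [Real.log_pow]; push_cast; ring
    have h3 : 1 + Real.log (2+|t|) ≤ 4 * Real.log lam := by
      rw [h2] at h1
      linarith
    calc ‖∫ r : ℝ, h (t - r) * (deriv Complex.Gamma (1 + Complex.I * r)
          / Complex.Gamma (1 + Complex.I * r))‖
        ≤ 11 * C₁ * (1 + Real.log (2+|t|)) * Real.pi := inner_bound t
      _ ≤ 11 * C₁ * (4 * Real.log lam) * Real.pi := by
          apply mul_le_mul_of_nonneg_right _ Real.pi_nonneg
          apply mul_le_mul_of_nonneg_left h3 (by positivity)
      _ = 44 * Real.pi * C₁ * Real.log lam := by ring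
  have hmain := intervalIntegral.norm_integral_le_of_norm_le_const hM
  have habs2 : |lam - (-lam)| = 2 * lam := by
    rw [_root_.abs_of_nonneg (by linarith : (0:ℝ) ≤ lam - -lam)]
    ring
  rw [habs2] at hmain
  calc ‖∫ t in (-lam)..lam, ∫ r : ℝ, h (t - r) *
          (deriv Complex.Gamma (1 + Complex.I * r)
            / Complex.Gamma (1 + Complex.I * r))‖
      ≤ 44 * Real.pi * C₁ * Real.log lam * (2 * lam) := hmain
    _ ≤ (88 * Real.pi * (C₁ + 1) + 1) * lam * Real.log lam := by
        nlinarith [Real.pi_nonneg, mul_nonneg (mul_nonneg Real.pi_nonneg hC₁) (mul_nonneg (by linarith : (0:ℝ) ≤ lam) (by linarith : (0:ℝ) ≤ Real.log lam)), mul_nonneg (by linarith : (0:ℝ) ≤ lam) (by linarith : (0:ℝ) ≤ Real.log lam)]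
end
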